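/- Let Λ and Γ be finite dimensional algebras, X a Λ-Γ-bimodule and Y a Γ-Λ-bimodule, both projective as left modules, such that Λ is a direct summand of X ⊗_Γ Y as a Λ-Λ-bimodule. Then for every n ≥ 0 and all finitely generated Λ-modules U, V, the map Ext^n_Λ(U,V) → Ext^n_Γ(Hom_Λ(X,U), Hom_Λ(X,V)) induced by the functor Hom_Λ(X,−) is injective. -/

import Mathlib

noncomputable section


section Bimod

variable (Λ Γ : Type) [Ring Λ] [Ring Γ]

/-- Right multiplication by `g : Γ` on a `Λ`-`Γ`-bimodule `X`, as a `Λ`-linear map. -/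
def rmulHom (X : Type) [AddCommGroup X] [Module Λ X] [Module Γᵐᵒᵖ X]
    [SMulCommClass Λ Γᵐᵒᵖ X] (g : Γ) : X →ₗ[Λ] X where
  toFun x := (MulOpposite.op g) • x
  map_add' a b := smul_add _ a b
  map_smul' a x := (smul_comm a (MulOpposite.op g) x).symm

/-- The left `Γ`-module structure on `Hom_Λ(X, J)`, where `X` is a `Λ`-`Γ`-bimodule and `J`
a `Λ`-module: `(g • h) x = h (x • g)`. -/
def homModule (X : Type) [AddCommGroup X] [Module Λ X] [Module Γᵐᵒᵖ X]
    [SMulCommClass Λ Γᵐᵒᵖ X] (J : Type) [AddCommGroup J] [Module Λ J] :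
    Module Γ (X →ₗ[Λ] J) where
  smul g h := h.comp (rmulHom Λ Γ X g)
  one_smul h := by
    ext x
    show h ((MulOpposite.op (1 : Γ)) • x) = h x
    simp
  mul_smul g₁ g₂ h := by
    ext x
    show h ((MulOpposite.op (g₁ * g₂)) • x) =
      h ((MulOpposite.op g₂) • (MulOpposite.op g₁) • x)
    rw [MulOpposite.op_mul, mul_smul]
  smul_zero g := by
    ext x
    rfl
  smul_add g h₁ h₂ := by
    ext x
    rfl
  add_smul g₁ g₂ h := by
    ext x
    show h ((MulOpposite.op (g₁ + g₂)) • x) =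
      h ((MulOpposite.op g₁) • x) + h ((MulOpposite.op g₂) • x)
    rw [MulOpposite.op_add, add_smul, map_add]
  zero_smul h := by
    ext x
    show h ((MulOpposite.op (0 : Γ)) • x) = 0
    simp

/-- `(T, β)` is the tensor product `X ⊗_Γ Y` of the `Λ`-`Γ`-bimodule `X` and the
`Γ`-`Λ`-bimodule `Y`, as a `Λ`-`Λ`-bimodule, characterized by its universal property. -/
def IsBimodTensor
    (X : Type) [AddCommGroup X] [Module Λ X] [Module Γᵐᵒᵖ X] [SMulCommClass Λ Γᵐᵒᵖ X]
    (Y : Type) [AddCommGroup Y] [Module Γ Y] [Module Λᵐᵒᵖ Y] [SMulCommClass Γ Λᵐᵒᵖ Y]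
    (T : Type) [AddCommGroup T] [Module Λ T] [Module Λᵐᵒᵖ T] [SMulCommClass Λ Λᵐᵒᵖ T]
    (β : X → Y → T) : Prop :=
  (∀ x₁ x₂ y, β (x₁ + x₂) y = β x₁ y + β x₂ y) ∧
  (∀ x y₁ y₂, β x (y₁ + y₂) = β x y₁ + β x y₂) ∧
  (∀ (a : Λ) x y, β (a • x) y = a • β x y) ∧
  (∀ (a : Λᵐᵒᵖ) x y, β x (a • y) = a • β x y) ∧
  (∀ (g : Γ) x y, β ((MulOpposite.op g) • x) y = β x (g • y)) ∧
  (∀ (W : Type) (i1 : AddCommGroup W) (i2 : Module Λ W) (i3 : Module Λᵐᵒᵖ W)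
      (i4 : SMulCommClass Λ Λᵐᵒᵖ W),
    ∀ b : X → Y → W,
      (∀ x₁ x₂ y, b (x₁ + x₂) y = b x₁ y + b x₂ y) →
      (∀ x y₁ y₂, b x (y₁ + y₂) = b x y₁ + b x y₂) →
      (∀ (a : Λ) x y, b (a • x) y = a • b x y) →
      (∀ (a : Λᵐᵒᵖ) x y, b x (a • y) = a • b x y) →
      (∀ (g : Γ) x y, b ((MulOpposite.op g) • x) y = b x (g • y)) →
      ∃! h : T → W,
        (∀ t₁ t₂, h (t₁ + t₂) = h t₁ + h t₂) ∧
        (∀ (a : Λ) t, h (a • t) = a • h t) ∧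
        (∀ (a : Λᵐᵒᵖ) t, h (a • t) = a • h t) ∧
        (∀ x y, h (β x y) = b x y))

/-- `Λ` is a direct summand of the `Λ`-`Λ`-bimodule `T`. -/
def IsBimodSummand (T : Type) [AddCommGroup T] [Module Λ T] [Module Λᵐᵒᵖ T]
    [SMulCommClass Λ Λᵐᵒᵖ T] : Prop :=
  ∃ (i : Λ → T) (p : T → Λ),
    (∀ a b : Λ, i (a + b) = i a + i b) ∧ (∀ (a : Λ) (c : Λ), i (a * c) = a • i c) ∧
    (∀ (a : Λ) (c : Λ), i (c * a) = (MulOpposite.op a) • i c) ∧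
    (∀ t₁ t₂, p (t₁ + t₂) = p t₁ + p t₂) ∧ (∀ (a : Λ) t, p (a • t) = a * p t) ∧
    (∀ (a : Λ) t, p ((MulOpposite.op a) • t) = p t * a) ∧
    (∀ a : Λ, p (i a) = a)

/-- `(J, γ)` is the induced `Λ`-module `X ⊗_Γ M`, characterized by its universal
property. -/
def IsInducedModule
    (X : Type) [AddCommGroup X] [Module Λ X] [Module Γᵐᵒᵖ X] [SMulCommClass Λ Γᵐᵒᵖ X]
    (M : Type) [AddCommGroup M] [Module Γ M]
    (J : Type) [AddCommGroup J] [Module Λ J] (γ : X → M → J) : Prop :=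
  (∀ x₁ x₂ m, γ (x₁ + x₂) m = γ x₁ m + γ x₂ m) ∧
  (∀ x m₁ m₂, γ x (m₁ + m₂) = γ x m₁ + γ x m₂) ∧
  (∀ (a : Λ) x m, γ (a • x) m = a • γ x m) ∧
  (∀ (g : Γ) x m, γ ((MulOpposite.op g) • x) m = γ x (g • m)) ∧
  (∀ (W : Type) (i1 : AddCommGroup W) (i2 : Module Λ W),
    ∀ b : X → M → W,
      (∀ x₁ x₂ m, b (x₁ + x₂) m = b x₁ m + b x₂ m) →
      (∀ x m₁ m₂, b x (m₁ + m₂) = b x m₁ + b x m₂) →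
      (∀ (a : Λ) x m, b (a • x) m = a • b x m) →
      (∀ (g : Γ) x m, b ((MulOpposite.op g) • x) m = b x (g • m)) →
      ∃! h : J →ₗ[Λ] W, ∀ x m, h (γ x m) = b x m)

end Bimod

section MyAux

variable (Λ : Type) [Ring Λ] (M V : Type) [AddCommGroup M] [AddCommGroup V]
  [Module Λ M] [Module Λ V]

/-- Left `Λ`-module structure on additive maps `M →+ V` via the target. -/
def amhL : Module Λ (M →+ V) where
  smul a f :=
    { toFun := fun e => a • f e
      map_zero' := by simp
      map_add' := fun x y => by simp [smul_add] }
  one_smul f := by ext e; exact one_smul _ _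
  mul_smul a b f := by ext e; exact mul_smul a b (f e)
  smul_zero a := by ext e; exact smul_zero a
  smul_add a f g := by ext e; exact smul_add a (f e) (g e)
  add_smul a b f := by ext e; exact add_smul a b (f e)
  zero_smul f := by ext e; exact zero_smul _ _

/-- Right `Λ`-module structure on additive maps `M →+ V` via the source. -/
def amhR : Module Λᵐᵒᵖ (M →+ V) where
  smul a f :=
    { toFun := fun e => f (a.unop • e)
      map_zero' := by simp
      map_add' := fun x y => by simp [smul_add] }
  one_smul f := by ext e; show f ((1 : Λᵐᵒᵖ).unop • e) = f e; simp
  mul_smul a b f := by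
    ext e
    show f ((a * b).unop • e) = f (b.unop • a.unop • e)
    rw [MulOpposite.unop_mul, mul_smul]
  smul_zero a := by ext e; rfl
  smul_add a f g := by ext e; rfl
  add_smul a b f := by
    ext e
    show f ((a + b).unop • e) = f (a.unop • e) + f (b.unop • e)
    rw [MulOpposite.unop_add, add_smul, map_add]
  zero_smul f := by ext e; show f ((0 : Λᵐᵒᵖ).unop • e) = 0; simp

/-- The two actions commute. -/
def amhC :
    letI := amhL Λ M V
    letI := amhR Λ M V
    SMulCommClass Λ Λᵐᵒᵖ (M →+ V) :=
  letI := amhL Λ M V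
  letI := amhR Λ M V
  ⟨fun _ _ _ => by ext e; rfl⟩

end MyAux

/-- The first part of the proof of Theorem 2.3: if `X` is a `Λ`-`Γ`-bimodule and `Y` a
`Γ`-`Λ`-bimodule, both projective as left modules, such that `Λ` is a direct summand of
`X ⊗_Γ Y` as a `Λ`-`Λ`-bimodule, then for every `n ≥ 0` and all finitely generated
`Λ`-modules `U, V` the map `Ext^n_Λ(U,V) → Ext^n_Γ(Hom_Λ(X,U), Hom_Λ(X,V))` induced by
`Hom_Λ(X,−)` is injective.  (The degree `0` case is injectivity on `Hom`; the cases `n ≥ 1`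
are expressed by the equivalent statement that an extension of `Λ`-modules whose image under
`Hom_Λ(X,−)` splits `Γ`-linearly is itself split.) -/
theorem stmt_4 (k Λ Γ : Type) [Field k]
    [Ring Λ] [Algebra k Λ] [FiniteDimensional k Λ]
    [Ring Γ] [Algebra k Γ] [FiniteDimensional k Γ]
    (X : Type) [AddCommGroup X] [Module Λ X] [Module Γᵐᵒᵖ X] [SMulCommClass Λ Γᵐᵒᵖ X]
    (Y : Type) [AddCommGroup Y] [Module Γ Y] [Module Λᵐᵒᵖ Y] [SMulCommClass Γ Λᵐᵒᵖ Y]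
    (hX1 : Module.Projective Λ X) (hY1 : Module.Projective Γ Y)
    (T : Type) [AddCommGroup T] [Module Λ T] [Module Λᵐᵒᵖ T] [SMulCommClass Λ Λᵐᵒᵖ T]
    (β : X → Y → T) (hT : IsBimodTensor Λ Γ X Y T β)
    (hsum : IsBimodSummand Λ T) :
    -- degree 0: injectivity of `Hom_Λ(U,V) → Hom_Γ(Hom_Λ(X,U), Hom_Λ(X,V))`
    (∀ (U : Type) (iU1 : AddCommGroup U) (iU2 : Module Λ U)
       (V : Type) (iV1 : AddCommGroup V) (iV2 : Module Λ V),
      Module.Finite Λ U → Module.Finite Λ V →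
      Function.Injective
        (fun (f : U →ₗ[Λ] V) => (fun (h : X →ₗ[Λ] U) => f.comp h))) ∧
    -- degrees `n ≥ 1`: an extension whose image under `Hom_Λ(X,−)` splits over `Γ` splits
    (∀ (U : Type) (iU1 : AddCommGroup U) (iU2 : Module Λ U)
       (V : Type) (iV1 : AddCommGroup V) (iV2 : Module Λ V)
       (E : Type) (iE1 : AddCommGroup E) (iE2 : Module Λ E),
      Module.Finite Λ U → Module.Finite Λ V → Module.Finite Λ E →
      ∀ (u : V →ₗ[Λ] E) (v : E →ₗ[Λ] U),
        Function.Injective u → Function.Surjective v →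
        LinearMap.range u = LinearMap.ker v →
        (letI : Module Γ (X →ₗ[Λ] E) := homModule Λ Γ X E
         letI : Module Γ (X →ₗ[Λ] V) := homModule Λ Γ X V
         ∃ r : (X →ₗ[Λ] E) →ₗ[Γ] (X →ₗ[Λ] V),
           ∀ h : X →ₗ[Λ] V, r (u.comp h) = h) →
        (∃ r : E →ₗ[Λ] V, ∀ z : V, r (u z) = z)) := by
  obtain ⟨βa1, βa2, βΛ, βΛop, βΓ, βUP⟩ := hT
  obtain ⟨i, p, iadd, iml, imr, padd, pml, pmr, pip⟩ := hsum
  constructor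
  · -- degree 0
    intro U iU1 iU2 V iV1 iV2 _ _ f₁ f₂ hf
    have hcomp : ∀ h : X →ₗ[Λ] U, f₁.comp h = f₂.comp h := fun h => congrFun hf h
    letI w1 := amhL Λ U V
    letI w2 := amhR Λ U V
    letI w3 := amhC Λ U V
    obtain ⟨h, ⟨hadd, hsl, hsr, hβ⟩, huniq⟩ :=
      βUP (U →+ V) inferInstance w1 w2 w3 (fun _ _ => (0 : U →+ V))
        (by intros; simp) (by intros; simp) (by intros; ext; exact (smul_zero _).symm)
        (by intros; simp) (by intros; simp)
    let H1 : T → (U →+ V) := fun t =>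
      AddMonoidHom.mk' (fun m => (f₁ - f₂) (p t • m))
        (fun m₁ m₂ => by beta_reduce; rw [smul_add, map_add])
    have e1 : H1 = h := by
      refine huniq H1 ⟨?_, ?_, ?_, ?_⟩
      · intro t₁ t₂; ext m
        show (f₁ - f₂) (p (t₁ + t₂) • m) = (f₁ - f₂) (p t₁ • m) + (f₁ - f₂) (p t₂ • m)
        rw [padd, add_smul, map_add]
      · intro a t; ext m
        show (f₁ - f₂) (p (a • t) • m) = a • (f₁ - f₂) (p t • m)
        rw [pml, mul_smul, map_smul]
      · intro a t; ext m
        show (f₁ - f₂) (p (a • t) • m) = (f₁ - f₂) (p t • (a.unop • m))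
        rw [← MulOpposite.op_unop a, pmr, mul_smul]
        rfl
      · intro x y; ext m
        show (f₁ - f₂) (p (β x y) • m) = 0
        let hy : X →ₗ[Λ] U :=
          { toFun := fun x' => p (β x' y) • m
            map_add' := fun x₁ x₂ => by beta_reduce; rw [βa1, padd, add_smul]
            map_smul' := fun a x' => by rw [βΛ, pml, mul_smul]; rfl }
        have h12 : f₁ (p (β x y) • m) = f₂ (p (β x y) • m) :=
          LinearMap.congr_fun (hcomp hy) x
        rw [LinearMap.sub_apply, h12, sub_self]
    have e2 : (fun _ : T => (0 : U →+ V)) = h := by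
      refine huniq _ ⟨?_, ?_, ?_, ?_⟩
      · intros; simp
      · intros; ext; exact (smul_zero _).symm
      · intros; simp
      · intros; rfl
    have key : H1 (i 1) = 0 := by rw [e1, ← e2]
    ext m
    have := DFunLike.congr_fun key m
    simp only [H1, AddMonoidHom.mk'_apply, pip, one_smul, AddMonoidHom.zero_apply,
      LinearMap.sub_apply, sub_eq_zero] at this
    exact this
  · -- degrees n ≥ 1
    intro U iU1 iU2 V iV1 iV2 E iE1 iE2 _ _ _ u v hu hv hker hsplit
    letI gE : Module Γ (X →ₗ[Λ] E) := homModule Λ Γ X E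
    letI gV : Module Γ (X →ₗ[Λ] V) := homModule Λ Γ X V
    obtain ⟨r, hr⟩ := hsplit
    let φ : E → Y → (X →ₗ[Λ] E) := fun e y =>
      { toFun := fun x => p (β x y) • e
        map_add' := fun x₁ x₂ => by beta_reduce; rw [βa1, padd, add_smul]
        map_smul' := fun a x' => by rw [βΛ, pml, mul_smul]; rfl }
    let ψ : V → Y → (X →ₗ[Λ] V) := fun z y =>
      { toFun := fun x => p (β x y) • z
        map_add' := fun x₁ x₂ => by beta_reduce; rw [βa1, padd, add_smul]
        map_smul' := fun a x' => by rw [βΛ, pml, mul_smul]; rfl }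
    have φu : ∀ (z : V) (y : Y), φ (u z) y = u.comp (ψ z y) := by
      intro z y; ext x
      show p (β x y) • u z = u (p (β x y) • z)
      rw [map_smul]
    have φadd : ∀ (e₁ e₂ : E) (y : Y), φ (e₁ + e₂) y = φ e₁ y + φ e₂ y := by
      intro e₁ e₂ y; ext x
      show p (β x y) • (e₁ + e₂) = p (β x y) • e₁ + p (β x y) • e₂
      rw [smul_add]
    have φy : ∀ (e : E) (y₁ y₂ : Y), φ e (y₁ + y₂) = φ e y₁ + φ e y₂ := by
      intro e y₁ y₂; ext x
      show p (β x (y₁ + y₂)) • e = p (β x y₁) • e + p (β x y₂) • e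
      rw [βa2, padd, add_smul]
    have φop : ∀ (a : Λᵐᵒᵖ) (e : E) (y : Y), φ e (a • y) = φ (a.unop • e) y := by
      intro a e y; ext x
      show p (β x (a • y)) • e = p (β x y) • (a.unop • e)
      rw [βΛop, ← MulOpposite.op_unop a, pmr, mul_smul]
      rfl
    have φΓ : ∀ (g : Γ) (e : E) (y : Y), g • (φ e y) = φ e (g • y) := by
      intro g e y; ext x
      show p (β ((MulOpposite.op g) • x) y) • e = p (β x (g • y)) • e
      rw [βΓ]
    letI w1 := amhL Λ E V
    letI w2 := amhR Λ E V
    letI w3 := amhC Λ E V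
    let b : X → Y → (E →+ V) := fun x y =>
      AddMonoidHom.mk' (fun e => r (φ e y) x)
        (fun e₁ e₂ => by beta_reduce; rw [φadd, map_add, LinearMap.add_apply])
    obtain ⟨h, ⟨hadd, hsl, hsr, hβ⟩, huniq⟩ :=
      βUP (E →+ V) inferInstance w1 w2 w3 b
        (by intro x₁ x₂ y; ext e
            show r (φ e y) (x₁ + x₂) = r (φ e y) x₁ + r (φ e y) x₂
            rw [map_add])
        (by intro x y₁ y₂; ext e
            show r (φ e (y₁ + y₂)) x = r (φ e y₁) x + r (φ e y₂) x
            rw [φy, map_add, LinearMap.add_apply])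
        (by intro a x y; ext e
            show r (φ e y) (a • x) = a • r (φ e y) x
            rw [map_smul])
        (by intro a x y; ext e
            show r (φ e (a • y)) x = r (φ (a.unop • e) y) x
            rw [φop])
        (by intro g x y; ext e
            show r (φ e y) ((MulOpposite.op g) • x) = r (φ e (g • y)) x
            rw [← φΓ, r.map_smul g (φ e y)]; rfl)
    letI v1 := amhL Λ V V
    letI v2 := amhR Λ V V
    letI v3 := amhC Λ V V
    let b2 : X → Y → (V →+ V) := fun x y =>
      AddMonoidHom.mk' (fun z => p (β x y) • z) (fun z₁ z₂ => smul_add _ _ _)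
    obtain ⟨h₂, hex₂, huniq₂⟩ :=
      βUP (V →+ V) inferInstance v1 v2 v3 b2
        (by intro x₁ x₂ y; ext z
            show p (β (x₁ + x₂) y) • z = p (β x₁ y) • z + p (β x₂ y) • z
            rw [βa1, padd, add_smul])
        (by intro x y₁ y₂; ext z
            show p (β x (y₁ + y₂)) • z = p (β x y₁) • z + p (β x y₂) • z
            rw [βa2, padd, add_smul])
        (by intro a x y; ext z
            show p (β (a • x) y) • z = a • (p (β x y) • z)
            rw [βΛ, pml, mul_smul])
        (by intro a x y; ext z
            show p (β x (a • y)) • z = p (β x y) • (a.unop • z)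
            rw [βΛop, ← MulOpposite.op_unop a, pmr, mul_smul]
            rfl)
        (by intro g x y; ext z
            show p (β ((MulOpposite.op g) • x) y) • z = p (β x (g • y)) • z
            rw [βΓ])
    let K1 : T → (V →+ V) := fun t =>
      AddMonoidHom.mk' (fun z => h t (u z)) (fun z₁ z₂ => by beta_reduce; rw [map_add, map_add])
    let K2 : T → (V →+ V) := fun t =>
      AddMonoidHom.mk' (fun z => p t • z) (fun z₁ z₂ => smul_add _ _ _)
    have e1 : K1 = h₂ := by
      refine huniq₂ K1 ⟨?_, ?_, ?_, ?_⟩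
      · intro t₁ t₂; ext z
        show h (t₁ + t₂) (u z) = h t₁ (u z) + h t₂ (u z)
        rw [hadd]; rfl
      · intro a t; ext z
        show h (a • t) (u z) = a • h t (u z)
        rw [hsl]; rfl
      · intro a t; ext z
        show h (a • t) (u z) = h t (u (a.unop • z))
        rw [hsr]
        show h t (a.unop • u z) = h t (u (a.unop • z))
        rw [u.map_smul]
      · intro x y; ext z
        show h (β x y) (u z) = p (β x y) • z
        rw [hβ]
        show r (φ (u z) y) x = p (β x y) • z
        rw [φu, hr]
        rfl
    have e2 : K2 = h₂ := by
      refine huniq₂ K2 ⟨?_, ?_, ?_, ?_⟩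
      · intro t₁ t₂; ext z
        show p (t₁ + t₂) • z = p t₁ • z + p t₂ • z
        rw [padd, add_smul]
      · intro a t; ext z
        show p (a • t) • z = a • (p t • z)
        rw [pml, mul_smul]
      · intro a t; ext z
        show p (a • t) • z = p t • (a.unop • z)
        rw [← MulOpposite.op_unop a, pmr, mul_smul]
        rfl
      · intro x y; rfl
    have hK : ∀ z : V, h (i 1) (u z) = p (i 1) • z := by
      intro z
      have hK12 : K1 (i 1) = K2 (i 1) := by rw [e1, e2]
      exact DFunLike.congr_fun hK12 z
    refine ⟨{ toFun := fun e => h (i 1) e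
              map_add' := fun e₁ e₂ => map_add _ _ _
              map_smul' := fun a e => ?_ }, ?_⟩
    · show h (i 1) (a • e) = a • h (i 1) e
      calc h (i 1) (a • e) = h ((MulOpposite.op a) • i 1) e := by
            rw [hsr]; rfl
        _ = h (i (1 * a)) e := by rw [imr]
        _ = h (i (a * 1)) e := by rw [one_mul, mul_one]
        _ = h (a • i 1) e := by rw [iml]
        _ = a • h (i 1) e := by rw [hsl]; rfl
    · intro z
      show h (i 1) (u z) = z
      rw [hK z, pip, one_smul]

end
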